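/- Let q ≥ 1 and r ≥ 1 be integers, let a ∈ ℝ, and let δ be a real number with 0 < δ < 1/(2q). Then lim_{M→∞} ∫_{r/q - δ}^{r/q + δ} e^{2πiax} · sin((2M+1)πqx) / sin(πqx) dx = (1/q) · e^{2πiar/q}. -/

import Mathlib

open MeasureTheory intervalIntegral Real Filter

-- Dirichlet kernel polynomial identity
lemma dirichlet_pol (M : ℕ) (t : ℝ) :
    Real.sin ((2*M+1)*t) = Real.sin t * (1 + 2 * ∑ m ∈ Finset.range M, Real.cos (2*(m+1)*t)) := by
  induction M with
  | zero => simp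
  | succ M ih =>
    have h := Real.sin_sub_sin ((2*(M:ℝ)+3)*t) ((2*(M:ℝ)+1)*t)
    have e1 : ((2*(M:ℝ)+3)*t - (2*(M:ℝ)+1)*t)/2 = t := by ring
    have e2 : ((2*(M:ℝ)+3)*t + (2*(M:ℝ)+1)*t)/2 = (2*(M:ℝ)+2)*t := by ring
    rw [e1, e2] at h
    have e3 : (2*((M:ℝ)+1)+1)*t = (2*(M:ℝ)+3)*t := by ring
    have e4 : (2*(M:ℝ)+2)*t = 2*((M:ℝ)+1)*t := by ring
    rw [e4] at h
    rw [Finset.sum_range_succ]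
    push_cast
    push_cast at ih h e3
    rw [e3]
    linarith [ih, h]

-- zero set of sin (π q u) is null
lemma sin_zero_null (q : ℕ) (hq : 1 ≤ q) :
    volume {u : ℝ | Real.sin (Real.pi * q * u) = 0} = 0 := by
  have hsub : {u : ℝ | Real.sin (Real.pi * q * u) = 0} ⊆ Set.range (fun n : ℤ => (n : ℝ)/q) := by
    intro u hu
    rw [Set.mem_setOf_eq, Real.sin_eq_zero_iff] at hu
    obtain ⟨n, hn⟩ := hu
    have hq0 : (q:ℝ) ≠ 0 := by positivity
    refine ⟨n, ?_⟩
    have hπ : Real.pi ≠ 0 := Real.pi_ne_zero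
    field_simp
    nlinarith [hn, Real.pi_pos]
  exact measure_mono_null hsub ((Set.countable_range (fun n : ℤ => (n:ℝ)/q)).measure_zero volume)

lemma kernel_ae (q M : ℕ) (hq : 1 ≤ q) :
    (fun u : ℝ => Real.sin ((2*M+1)*Real.pi*q*u) / Real.sin (Real.pi*q*u)) =ᵐ[volume]
    (fun u => 1 + 2 * ∑ m ∈ Finset.range M, Real.cos (2*(m+1)*(Real.pi*q*u))) := by
  have h0 : ∀ᵐ u : ℝ, Real.sin (Real.pi*q*u) ≠ 0 := by
    rw [ae_iff]
    simpa using sin_zero_null q hq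
  filter_upwards [h0] with u hu
  have e : (2*(M:ℝ)+1)*Real.pi*q*u = (2*M+1)*(Real.pi*q*u) := by ring
  rw [e, dirichlet_pol M (Real.pi*q*u), mul_div_cancel_left₀ _ hu]

lemma half_period (q M : ℕ) (hq : 1 ≤ q) :
    ∫ u in (-(1/(2*(q:ℝ))))..(1/(2*(q:ℝ))),
      Real.sin ((2*M+1)*Real.pi*q*u) / Real.sin (Real.pi*q*u) = 1/q := by
  have hq0 : (q:ℝ) ≠ 0 := by positivity
  rw [intervalIntegral.integral_congr_ae ((kernel_ae q M hq).mono (by intro u h _; exact h))]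
  have hint : ∀ m ∈ Finset.range M,
      IntervalIntegrable (fun u : ℝ => Real.cos (2*((m:ℝ)+1)*(Real.pi*q*u))) volume
        (-(1/(2*(q:ℝ)))) (1/(2*(q:ℝ))) := by
    intro m _
    exact (Real.continuous_cos.comp (by fun_prop)).intervalIntegrable _ _
  rw [intervalIntegral.integral_add (g := fun u : ℝ => 2 * ∑ m ∈ Finset.range M, Real.cos (2*((m:ℝ)+1)*(Real.pi*q*u))) (intervalIntegrable_const)
    (((continuous_const.mul (continuous_finset_sum _ (fun m _ => Real.continuous_cos.comp (by fun_prop)))) : Continuous fun u : ℝ => 2 * ∑ m ∈ Finset.range M, Real.cos (2*((m:ℝ)+1)*(Real.pi*q*u))).intervalIntegrable _ _)]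
  rw [intervalIntegral.integral_const_mul, intervalIntegral.integral_finset_sum hint]
  have hzero : ∀ m ∈ Finset.range M,
      (∫ u in (-(1/(2*(q:ℝ))))..(1/(2*(q:ℝ))), Real.cos (2*((m:ℝ)+1)*(Real.pi*q*u))) = 0 := by
    intro m _
    have hc : (2*((m:ℝ)+1)*Real.pi*q) ≠ 0 := by positivity
    have e : ∀ u : ℝ, 2*((m:ℝ)+1)*(Real.pi*q*u) = (2*((m:ℝ)+1)*Real.pi*q) * u := fun u => by ring
    simp_rw [e]
    rw [intervalIntegral.integral_comp_mul_left (fun x => Real.cos x) hc, integral_cos]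
    have e1 : 2*((m:ℝ)+1)*Real.pi*q * (1/(2*q)) = ((m+1 : ℕ) : ℝ) * Real.pi := by push_cast; field_simp
    have e2 : 2*((m:ℝ)+1)*Real.pi*q * (-(1/(2*q))) = -(((m+1 : ℕ) : ℝ) * Real.pi) := by push_cast; field_simp
    rw [e1, e2, Real.sin_neg, Real.sin_nat_mul_pi]
    simp
  rw [Finset.sum_congr rfl hzero]
  simp
  field_simp
  ring

open FourierTransform in
lemma RL_sin (g : ℝ → ℂ) (hg : Integrable g) (φ : ℕ → ℝ) (hφ : Tendsto φ atTop atTop) :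
    Tendsto (fun M : ℕ => ∫ v : ℝ, g v * (Real.sin (φ M * v) : ℂ)) atTop (nhds 0) := by
  have RL := Real.tendsto_integral_exp_smul_cocompact g
  set A : ℝ → ℂ := fun w => ∫ v : ℝ, 𝐞 (-(v * w)) • g v with hA
  have hcc : ∀ (ψ : ℕ → ℝ), Tendsto ψ atTop atTop ∨ Tendsto ψ atTop atBot →
      Tendsto (fun M => A (ψ M)) atTop (nhds 0) := by
    intro ψ hψ
    refine RL.comp ?_
    rw [cocompact_eq_atBot_atTop]
    rcases hψ with h | h
    · exact h.mono_right le_sup_right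
    · exact h.mono_right le_sup_left
  have h1 : Tendsto (fun M => A (φ M / (2 * Real.pi))) atTop (nhds 0) :=
    hcc _ (Or.inl (hφ.atTop_div_const (by positivity)))
  have h2 : Tendsto (fun M => A (-(φ M / (2 * Real.pi)))) atTop (nhds 0) :=
    hcc _ (Or.inr (tendsto_neg_atBot_iff.mpr (hφ.atTop_div_const (by positivity))))
  have key : ∀ M, (∫ v : ℝ, g v * (Real.sin (φ M * v) : ℂ))
      = (Complex.I/2) * A (φ M / (2 * Real.pi)) - (Complex.I/2) * A (-(φ M / (2 * Real.pi))) := by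
    intro M
    have int1 : Integrable (fun v : ℝ => 𝐞 (-(v * (φ M / (2 * Real.pi)))) • g v) := by
      have := (Real.fourierIntegral_convergent_iff (f := g) (φ M / (2 * Real.pi))).2 hg
      simpa [real_inner_comm, mul_comm] using this
    have int2 : Integrable (fun v : ℝ => 𝐞 (-(v * (-(φ M / (2 * Real.pi))))) • g v) := by
      have := (Real.fourierIntegral_convergent_iff (f := g) (-(φ M / (2 * Real.pi)))).2 hg
      simpa [real_inner_comm, mul_comm] using this
    rw [hA]
    simp only
    rw [← MeasureTheory.integral_const_mul, ← MeasureTheory.integral_const_mul, ← MeasureTheory.integral_sub (int1.const_mul _) (int2.const_mul _)]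
    congr 1
    ext v
    rw [Circle.smul_def, Circle.smul_def, Real.fourierChar_apply, Real.fourierChar_apply]
    have e1 : (2 * Real.pi * -(v * (φ M / (2 * Real.pi))) : ℝ) = -(φ M * v) := by
      field_simp
    have e2 : (2 * Real.pi * -(v * (-(φ M / (2 * Real.pi)))) : ℝ) = φ M * v := by
      field_simp
    rw [e1, e2]
    simp only [smul_eq_mul]
    rw [Complex.ofReal_sin, Complex.sin]
    push_cast
    ring
  simp_rw [key]
  have := ((h1.const_mul (Complex.I/2)).sub (h2.const_mul (Complex.I/2)))
  simpa using this

lemma freq_tendsto (q : ℕ) (hq : 1 ≤ q) :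
    Tendsto (fun M : ℕ => (2*M+1)*Real.pi*(q:ℝ)) atTop atTop := by
  apply tendsto_atTop_mono (f := fun M : ℕ => (M:ℝ))
  · intro M
    have h1 : (1:ℝ) ≤ (q:ℝ) := by exact_mod_cast hq
    have h2 : (1:ℝ) ≤ Real.pi * q := by nlinarith [Real.pi_gt_three]
    have h3 : (0:ℝ) ≤ 2*(M:ℝ)+1 := by positivity
    calc (M:ℝ) ≤ 2*M+1 := by linarith [Nat.cast_nonneg (α := ℝ) M]
      _ = (2*M+1)*1 := by ring
      _ ≤ (2*M+1)*(Real.pi*q) := by exact mul_le_mul_of_nonneg_left h2 h3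
      _ = (2*M+1)*Real.pi*q := by ring
  · exact tendsto_natCast_atTop_atTop

lemma RL_interval (q : ℕ) (hq : 1 ≤ q) (f : ℝ → ℂ) (lo hi : ℝ) (hlohi : lo ≤ hi)
    (hf : IntegrableOn f (Set.Ioc lo hi)) :
    Tendsto (fun M : ℕ => ∫ u in lo..hi, f u * (Real.sin ((2*M+1)*Real.pi*q*u) : ℂ))
      atTop (nhds 0) := by
  set g : ℝ → ℂ := (Set.Ioc lo hi).indicator f with hgdef
  have hg : Integrable g := (integrable_indicator_iff measurableSet_Ioc).2 hf
  have key := RL_sin g hg (fun M => (2*M+1)*Real.pi*(q:ℝ)) (freq_tendsto q hq)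
  have eq : ∀ M : ℕ, (∫ u in lo..hi, f u * (Real.sin ((2*M+1)*Real.pi*q*u) : ℂ))
      = ∫ v : ℝ, g v * (Real.sin ((2*M+1)*Real.pi*(q:ℝ) * v) : ℂ) := by
    intro M
    rw [intervalIntegral.integral_of_le hlohi,
      ← MeasureTheory.integral_indicator measurableSet_Ioc]
    congr 1
    ext v
    rw [hgdef, Set.indicator_mul_left]
  exact key.congr (fun M => (eq M).symm)

lemma abs_exp_I_sub_one_le (θ : ℝ) : ‖Complex.exp (θ * Complex.I) - 1‖ ≤ |θ| := by
  have h1 : ((θ:ℂ)/2)*Complex.I + ((θ:ℂ)/2)*Complex.I = (θ:ℂ)*Complex.I := by ring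
  have h2 : ((θ:ℂ)/2)*Complex.I + (-((θ:ℂ)/2))*Complex.I = 0 := by ring
  have hsplit : Complex.exp ((θ:ℂ) * Complex.I) - 1
      = Complex.exp (((θ:ℂ)/2) * Complex.I) * (2 * Complex.sin ((θ:ℂ)/2) * Complex.I) := by
    calc Complex.exp ((θ:ℂ) * Complex.I) - 1
        = Complex.exp (((θ:ℂ)/2)*Complex.I) * Complex.exp (((θ:ℂ)/2)*Complex.I)
            - Complex.exp (((θ:ℂ)/2)*Complex.I) * Complex.exp ((-((θ:ℂ)/2))*Complex.I) := by
          rw [← Complex.exp_add, ← Complex.exp_add, h1, h2, Complex.exp_zero]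
      _ = Complex.exp (((θ:ℂ)/2) * Complex.I) * (2 * Complex.sin ((θ:ℂ)/2) * Complex.I) := by
          rw [Complex.sin]
          linear_combination (Complex.exp (((θ:ℂ)/2)*Complex.I) *
            (Complex.exp (((θ:ℂ)/2)*Complex.I) - Complex.exp (-((θ:ℂ)/2)*Complex.I))) * Complex.I_sq
  rw [hsplit]
  rw [norm_mul, norm_mul, norm_mul]
  rw [show ((θ:ℂ)/2) = ((θ/2 : ℝ) : ℂ) by push_cast; ring]
  rw [Complex.norm_exp_ofReal_mul_I, ← Complex.ofReal_sin]
  simp only [Complex.norm_real, Complex.norm_I, Complex.norm_two, one_mul, mul_one]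
  have := Real.abs_sin_le_abs (x := θ/2)
  rw [abs_div] at this
  norm_num at this ⊢
  linarith

lemma kernel_intInt (q M : ℕ) (hq : 1 ≤ q) (x y : ℝ) :
    IntervalIntegrable
      (fun u => ((Real.sin ((2*M+1)*Real.pi*q*u) / Real.sin (Real.pi*q*u) : ℝ) : ℂ))
      volume x y := by
  have hcont : Continuous (fun u : ℝ =>
      ((1 + 2 * ∑ m ∈ Finset.range M, Real.cos (2*((m:ℝ)+1)*(Real.pi*q*u)) : ℝ) : ℂ)) := by
    apply Complex.continuous_ofReal.comp
    fun_prop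
  have hae : (fun u : ℝ =>
      ((1 + 2 * ∑ m ∈ Finset.range M, Real.cos (2*((m:ℝ)+1)*(Real.pi*q*u)) : ℝ) : ℂ)) =ᵐ[volume]
      (fun u => ((Real.sin ((2*M+1)*Real.pi*q*u) / Real.sin (Real.pi*q*u) : ℝ) : ℂ)) := by
    filter_upwards [(kernel_ae q M hq)] with u hu
    rw [hu]
  have h := hcont.intervalIntegrable (μ := volume) x y
  exact ⟨h.1.congr (ae_restrict_of_ae hae), h.2.congr (ae_restrict_of_ae hae)⟩

lemma main_reduced (q : ℕ) (hq : 1 ≤ q) (a δ : ℝ) (hδ0 : 0 < δ) (hδ1 : δ < 1/(2*(q:ℝ))) :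
    Tendsto (fun M : ℕ => ∫ u in (-δ)..δ,
        Complex.exp (2*Real.pi*Complex.I*a*u) *
          ((Real.sin ((2*M+1)*Real.pi*q*u) / Real.sin (Real.pi*q*u) : ℝ) : ℂ))
      atTop (nhds (1/(q:ℂ))) := by
  have hqR : (1:ℝ) ≤ (q:ℝ) := by exact_mod_cast hq
  have hq0 : (0:ℝ) < q := by linarith
  set c : ℝ := 1/(2*(q:ℝ)) with hc
  have hc0 : 0 < c := by positivity
  have hδc : δ < c := hδ1
  set K : ℕ → ℝ → ℂ := fun M u =>
    ((Real.sin ((2*M+1)*Real.pi*q*u) / Real.sin (Real.pi*q*u) : ℝ) : ℂ) with hK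
  set E : ℝ → ℂ := fun u => Complex.exp (2*Real.pi*Complex.I*a*u) with hE
  have hEcont : Continuous E := by
    apply Complex.continuous_exp.comp
    fun_prop
  -- A: (E - 1) * K part tends to 0
  have hAbound : ∀ u ∈ Set.Ioc (-δ) δ,
      ‖(E u - 1) / ((Real.sin (Real.pi*q*u) : ℝ) : ℂ)‖ ≤ Real.pi * |a| / q := by
    intro u hu
    rcases eq_or_ne (Real.sin (Real.pi*q*u)) 0 with h0 | h0
    · simp [h0]
      positivity
    have hu0 : u ≠ 0 := by
      intro h; apply h0; rw [h]; simp
    have habs : |u| ≤ δ := abs_le.2 ⟨le_of_lt hu.1, hu.2⟩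
    have habs0 : 0 < |u| := abs_pos.2 hu0
    have hnum : ‖E u - 1‖ ≤ 2*Real.pi* |a| * |u| := by
      have : E u = Complex.exp (((2*Real.pi*a*u : ℝ) : ℂ) * Complex.I) := by
        rw [hE]; push_cast; ring_nf
      rw [this]
      calc ‖Complex.exp (((2*Real.pi*a*u : ℝ) : ℂ) * Complex.I) - 1‖
          ≤ |2*Real.pi*a*u| := abs_exp_I_sub_one_le _
        _ = 2*Real.pi* |a| * |u| := by
            rw [abs_mul, abs_mul, abs_mul]
            rw [abs_of_nonneg (by norm_num : (0:ℝ) ≤ 2), abs_of_nonneg Real.pi_pos.le]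
    have hden : 2*(q:ℝ)* |u| ≤ |Real.sin (Real.pi*q*u)| := by
      have harg : |Real.pi*q*u| ≤ Real.pi/2 := by
        rw [abs_mul, abs_mul, abs_of_nonneg Real.pi_pos.le, abs_of_nonneg hq0.le]
        calc Real.pi*q* |u| ≤ Real.pi*q*δ := by
              apply mul_le_mul_of_nonneg_left habs (by positivity)
          _ ≤ Real.pi*q*(1/(2*q)) := by
              apply mul_le_mul_of_nonneg_left (le_of_lt hδ1) (by positivity)
          _ = Real.pi/2 := by field_simp
      have := Real.mul_abs_le_abs_sin (x := Real.pi*q*u) harg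
      calc 2*(q:ℝ)* |u| = 2/Real.pi * |Real.pi*q*u| := by
            rw [abs_mul, abs_mul, abs_of_nonneg Real.pi_pos.le, abs_of_nonneg hq0.le]
            field_simp
        _ ≤ |Real.sin (Real.pi*q*u)| := this
    rw [norm_div]
    have hden0 : (0:ℝ) < 2*(q:ℝ)* |u| := by positivity
    calc ‖E u - 1‖ / ‖((Real.sin (Real.pi*q*u) : ℝ) : ℂ)‖
        ≤ (2*Real.pi* |a| * |u|) / (2*(q:ℝ)* |u|) := by
          apply div_le_div₀ (by positivity) hnum hden0
          rw [Complex.norm_real]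
          exact hden
      _ = Real.pi * |a| / q := by
          rw [div_eq_div_iff (by positivity) (by positivity)]
          ring
  have hAint : IntegrableOn (fun u => (E u - 1) / ((Real.sin (Real.pi*q*u) : ℝ) : ℂ))
      (Set.Ioc (-δ) δ) := by
    apply Integrable.mono' (g := fun _ => Real.pi * |a| / q)
      ((integrableOn_const (C := Real.pi * |a| / q) (μ := volume) (s := Set.Ioc (-δ) δ) measure_Ioc_lt_top.ne))
    · apply Measurable.aestronglyMeasurable
      apply Measurable.div
      · exact ((hEcont.sub continuous_const).measurable)
      · exact (Complex.continuous_ofReal.comp (by fun_prop)).measurable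
    · exact (ae_restrict_iff' measurableSet_Ioc).2 (Filter.Eventually.of_forall hAbound)
  have hA : Tendsto (fun M : ℕ => ∫ u in (-δ)..δ, (E u - 1) * K M u) atTop (nhds 0) := by
    have := RL_interval q hq (fun u => (E u - 1) / ((Real.sin (Real.pi*q*u) : ℝ) : ℂ))
      (-δ) δ (by linarith) hAint
    apply this.congr
    intro M
    apply intervalIntegral.integral_congr
    intro u _
    rw [hK]
    push_cast
    ring
  -- B, C : tails tend to 0
  have htail : ∀ lo hi : ℝ, lo ≤ hi → (∀ u ∈ Set.Icc lo hi, Real.sin (Real.pi*q*u) ≠ 0) →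
      Tendsto (fun M : ℕ => ∫ u in lo..hi, K M u) atTop (nhds 0) := by
    intro lo hi hlohi hne
    have hcont : ContinuousOn (fun u => (1:ℂ) / ((Real.sin (Real.pi*q*u) : ℝ) : ℂ))
        (Set.Icc lo hi) := by
      apply ContinuousOn.div continuousOn_const
      · exact (Complex.continuous_ofReal.comp (by fun_prop)).continuousOn
      · intro u hu
        exact Complex.ofReal_ne_zero.mpr (hne u hu)
    have hint : IntegrableOn (fun u => (1:ℂ) / ((Real.sin (Real.pi*q*u) : ℝ) : ℂ))
        (Set.Ioc lo hi) :=
      (hcont.integrableOn_Icc).mono_set Set.Ioc_subset_Icc_self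
    have := RL_interval q hq (fun u => (1:ℂ) / ((Real.sin (Real.pi*q*u) : ℝ) : ℂ))
      lo hi hlohi hint
    apply this.congr
    intro M
    apply intervalIntegral.integral_congr
    intro u _
    rw [hK]
    push_cast
    ring
  have hB : Tendsto (fun M : ℕ => ∫ u in δ..c, K M u) atTop (nhds 0) := by
    apply htail δ c hδc.le
    intro u hu
    have h1 : 0 < Real.pi*q*u := mul_pos (by positivity) (lt_of_lt_of_le hδ0 hu.1)
    have h2 : Real.pi*q*u < Real.pi := by
      calc Real.pi*q*u ≤ Real.pi*q*c := by
            apply mul_le_mul_of_nonneg_left hu.2 (by positivity)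
        _ = Real.pi/2 := by rw [hc]; field_simp
        _ < Real.pi := by linarith [Real.pi_pos]
    exact ne_of_gt (Real.sin_pos_of_pos_of_lt_pi h1 h2)
  have hC : Tendsto (fun M : ℕ => ∫ u in (-c)..(-δ), K M u) atTop (nhds 0) := by
    apply htail (-c) (-δ) (by linarith)
    intro u hu
    have h1 : 0 < Real.pi*q*(-u) := by
      have : u ≤ -δ := hu.2
      have : 0 < -u := by linarith
      positivity
    have h2 : Real.pi*q*(-u) < Real.pi := by
      have : -c ≤ u := hu.1
      calc Real.pi*q*(-u) ≤ Real.pi*q*c := by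
            apply mul_le_mul_of_nonneg_left (by linarith) (by positivity)
        _ = Real.pi/2 := by rw [hc]; field_simp
        _ < Real.pi := by linarith [Real.pi_pos]
    have hpos := Real.sin_pos_of_pos_of_lt_pi h1 h2
    intro h
    rw [show Real.pi*q*(-u) = -(Real.pi*q*u) by ring, Real.sin_neg, h] at hpos
    simp at hpos
  -- D : half period
  have hD : ∀ M : ℕ, (∫ u in (-c)..c, K M u) = (1/(q:ℂ)) := by
    intro M
    rw [hK]
    simp only
    rw [intervalIntegral.integral_ofReal, half_period q M hq]
    push_cast
    ring
  -- splitting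
  have hsplit : ∀ M : ℕ, (∫ u in (-δ)..δ, E u * K M u)
      = (∫ u in (-δ)..δ, (E u - 1) * K M u)
        + ((1/(q:ℂ)) - (∫ u in (-c)..(-δ), K M u) - (∫ u in δ..c, K M u)) := by
    intro M
    have i1 : IntervalIntegrable (K M) volume (-c) (-δ) := kernel_intInt q M hq (-c) (-δ)
    have i2 : IntervalIntegrable (K M) volume (-δ) δ := kernel_intInt q M hq (-δ) δ
    have i3 : IntervalIntegrable (K M) volume δ c := kernel_intInt q M hq δ c
    have hEK : IntervalIntegrable (fun u => E u * K M u) volume (-δ) δ :=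
      IntervalIntegrable.continuousOn_mul i2 hEcont.continuousOn
    have hadd1 := intervalIntegral.integral_add_adjacent_intervals i1 i2
    have hadd2 := intervalIntegral.integral_add_adjacent_intervals (i1.trans i2) i3
    have hsub : (∫ u in (-δ)..δ, E u * K M u) - (∫ u in (-δ)..δ, K M u)
        = ∫ u in (-δ)..δ, (E u - 1) * K M u := by
      rw [← intervalIntegral.integral_sub hEK i2]
      apply intervalIntegral.integral_congr
      intro u _
      ring
    have hD' := hD M
    linear_combination hsub + hadd1 + hadd2 + hD'
  show Tendsto (fun M : ℕ => ∫ u in (-δ)..δ, E u * K M u) atTop (nhds (1/(q:ℂ)))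
  simp only [hsplit]
  have := hA.add (((tendsto_const_nhds (x := (1/(q:ℂ)))).sub hC).sub hB)
  simpa using this

/-- The localization computation in the proof of the paper's Theorem 3: for integers
`q, r ≥ 1` and `0 < δ < 1/(2q)`,
`lim_{M→∞} ∫_{r/q-δ}^{r/q+δ} e^{2πiax} sin((2M+1)πqx)/sin(πqx) dx = (1/q) e^{2πiar/q}`. -/
theorem dirichlet_kernel_localization (q r : ℕ) (hq : 1 ≤ q) (hr : 1 ≤ r)
    (a : ℝ) (δ : ℝ) (hδ0 : 0 < δ) (hδ1 : δ < 1 / (2 * q)) :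
    Filter.Tendsto (fun M : ℕ =>
        ∫ x in ((r : ℝ) / q - δ)..((r : ℝ) / q + δ),
          Complex.exp (2 * Real.pi * Complex.I * a * x) *
            ((Real.sin ((2 * M + 1) * Real.pi * q * x) / Real.sin (Real.pi * q * x) : ℝ) : ℂ))
      Filter.atTop
      (nhds ((1 / (q : ℂ)) * Complex.exp (2 * Real.pi * Complex.I * a * r / q))) := by
  have hq0 : (q:ℝ) ≠ 0 := by positivity
  have key := main_reduced q hq a δ hδ0 hδ1
  have hsub : ∀ M : ℕ,
      (∫ x in ((r : ℝ) / q - δ)..((r : ℝ) / q + δ),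
          Complex.exp (2 * Real.pi * Complex.I * a * x) *
            ((Real.sin ((2 * M + 1) * Real.pi * q * x) / Real.sin (Real.pi * q * x) : ℝ) : ℂ))
      = Complex.exp (2 * Real.pi * Complex.I * a * r / q) *
          ∫ u in (-δ)..δ, Complex.exp (2*Real.pi*Complex.I*a*u) *
            ((Real.sin ((2*M+1)*Real.pi*q*u) / Real.sin (Real.pi*q*u) : ℝ) : ℂ) := by
    intro M
    rw [← intervalIntegral.integral_const_mul]
    rw [show ((r : ℝ) / q - δ) = -δ + r/q by ring, show ((r : ℝ) / q + δ) = δ + r/q by ring]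
    rw [← intervalIntegral.integral_comp_add_right (fun x =>
      Complex.exp (2 * Real.pi * Complex.I * a * x) *
        ((Real.sin ((2 * M + 1) * Real.pi * q * x) / Real.sin (Real.pi * q * x) : ℝ) : ℂ)) ((r:ℝ)/q)]
    apply intervalIntegral.integral_congr
    intro u _
    simp only
    have hexp : Complex.exp (2 * Real.pi * Complex.I * a * ((u + (r:ℝ)/q) : ℝ))
        = Complex.exp (2 * Real.pi * Complex.I * a * r / q) *
          Complex.exp (2*Real.pi*Complex.I*a*u) := by
      rw [← Complex.exp_add]
      congr 1
      push_cast
      ring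
    have e1 : (2*(M:ℝ)+1)*Real.pi*q*(u + (r:ℝ)/q)
        = (2*M+1)*Real.pi*q*u + (((2*M+1)*r : ℕ) : ℤ)*Real.pi := by
      push_cast
      field_simp
    have e2 : Real.pi*q*(u + (r:ℝ)/q) = Real.pi*q*u + ((r : ℤ))*Real.pi := by
      push_cast
      field_simp
    have hsign : ((-1:ℝ)^((((2*M+1)*r : ℕ)) : ℤ)) = (-1:ℝ)^((r : ℕ) : ℤ) := by
      rw [zpow_natCast, zpow_natCast]
      rw [show (2*M+1)*r = 2*(M*r) + r by ring, pow_add, pow_mul]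
      norm_num
    have hsin : Real.sin ((2*(M:ℝ)+1)*Real.pi*q*(u + (r:ℝ)/q)) / Real.sin (Real.pi*q*(u + (r:ℝ)/q))
        = Real.sin ((2*M+1)*Real.pi*q*u) / Real.sin (Real.pi*q*u) := by
      rw [e1, e2, Real.sin_add_int_mul_pi, Real.sin_add_int_mul_pi, hsign, zpow_natCast]
      exact mul_div_mul_left _ _ (by positivity)
    rw [hexp, hsin]
    ring
  simp_rw [hsub]
  have := key.const_mul (Complex.exp (2 * Real.pi * Complex.I * a * r / q))
  simpa [mul_comm] using this
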